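/- For every w ≥ 1 there exists a finite simple graph G with exactly 12w vertices and maximum degree w + 4 that admits an execution of algorithm A_MIS under the central scheduler, starting from the configuration in which every vertex has state OUT, consisting of at least w³ moves. -/

import Mathlib

/-- Degree of a vertex: the number of its neighbors. -/
noncomputable def deg {V : Type*} (G : SimpleGraph V) (v : V) : ℕ :=
  Nat.card (G.neighborSet v)

/-- Maximum degree Δ of a finite graph. -/
noncomputable def maxDeg {V : Type*} [Fintype V] (G : SimpleGraph V) : ℕ :=
  Finset.univ.sup (deg G)

/-- A configuration assigns each vertex a state: `true` = IN, `false` = OUT.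
Vertex `v` is enabled in `s` iff rule R1 applies (`s v = OUT` and
`I≤(v,s) = {w ∈ N(v) : deg w ≤ deg v ∧ s w = IN}` is empty) or rule R2 applies
(`s v = IN` and `I≤(v,s)` is nonempty). -/
def Enabled {V : Type*} (G : SimpleGraph V) (s : V → Bool) (v : V) : Prop :=
  (s v = false ∧ ∀ w, G.Adj v w → deg G w ≤ deg G v → s w = false) ∨
  (s v = true ∧ ∃ w, G.Adj v w ∧ deg G w ≤ deg G v ∧ s w = true)

/-- A move of the central scheduler: flip the state of one enabled vertex. -/
def Move {V : Type*} [DecidableEq V] (G : SimpleGraph V) (s s' : V → Bool) : Prop :=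
  ∃ v, Enabled G s v ∧ s' = Function.update s v (!s v)



namespace AMIS

/-- adjacency relation on indices; `u+1 = w`. -/
def rel (u a b : ℕ) : Prop :=
  (a < u+3 ∧ u+3 ≤ b ∧ b < 2*u+3) ∨
  (a < u+3 ∧ 5*u+5 ≤ b ∧ b < 5*u+10) ∨
  (u+3 ≤ a ∧ a < 2*u+3 ∧ b = a + u) ∨
  (2*u+3 ≤ a ∧ a < 3*u+3 ∧ 3*u+3 ≤ b ∧ b < 4*u+4) ∨
  (2*u+3 ≤ a ∧ a < 3*u+3 ∧ b = 5*u+10) ∨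
  (3*u+3 ≤ a ∧ a < 4*u+4 ∧ b = a + u + 1) ∨
  (3*u+3 ≤ a ∧ a < 4*u+4 ∧ b = 5*u+11)

instance (u a b : ℕ) : Decidable (rel u a b) := by unfold rel; infer_instance

def G (u : ℕ) : SimpleGraph (Fin (12*(u+1))) where
  Adj v v' := v ≠ v' ∧ (rel u v.val v'.val ∨ rel u v'.val v.val)
  symm := by constructor; intro v v' ⟨h1, h2⟩; exact ⟨h1.symm, h2.symm⟩
  loopless := by constructor; intro v ⟨h1, _⟩; exact h1 rfl

lemma adj_iff {u : ℕ} (v v' : Fin (12*(u+1))) :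
    (G u).Adj v v' ↔ v.val ≠ v'.val ∧ (rel u v.val v'.val ∨ rel u v'.val v.val) := by
  constructor
  · rintro ⟨h1, h2⟩; exact ⟨fun h => h1 (Fin.ext h), h2⟩
  · rintro ⟨h1, h2⟩; exact ⟨fun h => h1 (congrArg Fin.val h), h2⟩

instance (u : ℕ) : DecidableRel (G u).Adj := fun v v' =>
  decidable_of_iff _ (adj_iff v v').symm

lemma deg_eq_card (u : ℕ) (v : Fin (12*(u+1))) :
    deg (G u) v = ((Finset.univ.filter (fun v' => (G u).Adj v v')).image Fin.val).card := by
  rw [deg, Nat.card_eq_fintype_card, SimpleGraph.card_neighborSet_eq_degree]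
  rw [Finset.card_image_of_injective _ Fin.val_injective, SimpleGraph.degree]
  congr 1
  ext v'
  simp [SimpleGraph.mem_neighborFinset]

lemma mem_image_filter_adj {u : ℕ} (v : Fin (12*(u+1))) (a : ℕ) :
    a ∈ (Finset.univ.filter (fun v' => (G u).Adj v v')).image Fin.val ↔
      a < 12*(u+1) ∧ v.val ≠ a ∧ (rel u v.val a ∨ rel u a v.val) := by
  simp only [Finset.mem_image, Finset.mem_filter, Finset.mem_univ, true_and]
  constructor
  · rintro ⟨v', hadj, rfl⟩
    exact ⟨v'.isLt, (adj_iff v v').1 hadj⟩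
  · rintro ⟨hlt, h⟩
    exact ⟨⟨a, hlt⟩, (adj_iff v ⟨a, hlt⟩).2 h, rfl⟩

end AMIS
namespace AMIS

def mk (u a : ℕ) : Fin (12*(u+1)) := ⟨a % (12*(u+1)), Nat.mod_lt _ (by omega)⟩

lemma mk_val {u a : ℕ} (h : a < 12*(u+1)) : (mk u a).val = a := Nat.mod_eq_of_lt h

def ldV (u j : ℕ) : Fin (12*(u+1)) := mk u j
def rV  (u i : ℕ) : Fin (12*(u+1)) := mk u (u+3+i)
def xV  (u i : ℕ) : Fin (12*(u+1)) := mk u (2*u+3+i)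
def RV  (u k : ℕ) : Fin (12*(u+1)) := mk u (3*u+3+k)
def XV  (u k : ℕ) : Fin (12*(u+1)) := mk u (4*u+4+k)
def pV  (u t : ℕ) : Fin (12*(u+1)) := mk u (5*u+5+t)

variable {u : ℕ}

lemma ldV_val {j : ℕ} (h : j < u+3) : (ldV u j).val = j := mk_val (by omega)
lemma rV_val {i : ℕ} (h : i < u) : (rV u i).val = u+3+i := mk_val (by omega)
lemma xV_val {i : ℕ} (h : i < u) : (xV u i).val = 2*u+3+i := mk_val (by omega)
lemma RV_val {k : ℕ} (h : k < u+1) : (RV u k).val = 3*u+3+k := mk_val (by omega)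
lemma XV_val {k : ℕ} (h : k < u+1) : (XV u k).val = 4*u+4+k := mk_val (by omega)
lemma pV_val {t : ℕ} (h : t < 5) : (pV u t).val = 5*u+5+t := mk_val (by omega)

lemma nbhd_ld (v : Fin (12*(u+1))) (hv : v.val < u+3) :
    (Finset.univ.filter (fun v' => (G u).Adj v v')).image Fin.val
      = Finset.Ico (u+3) (2*u+3) ∪ Finset.Ico (5*u+5) (5*u+10) := by
  ext a
  rw [mem_image_filter_adj]
  simp only [Finset.mem_union, Finset.mem_Ico]
  constructor
  · rintro ⟨hlt, hne, h | h⟩ <;> simp only [rel] at h <;>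
      rcases h with h|h|h|h|h|h|h <;> omega
  · intro h
    refine ⟨by omega, by omega, ?_⟩
    simp only [rel]
    rcases h with h | h
    · exact Or.inl (Or.inl ⟨hv, h⟩)
    · exact Or.inl (Or.inr <| Or.inl ⟨hv, h⟩)

lemma deg_ld (v : Fin (12*(u+1))) (hv : v.val < u+3) : deg (G u) v = u+5 := by
  rw [deg_eq_card, nbhd_ld v hv, Finset.card_union_of_disjoint (by
    simp only [Finset.disjoint_left, Finset.mem_Ico]; omega)]
  rw [Nat.card_Ico, Nat.card_Ico]; omega

lemma nbhd_r (v : Fin (12*(u+1))) (hv : u+3 ≤ v.val ∧ v.val < 2*u+3) :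
    (Finset.univ.filter (fun v' => (G u).Adj v v')).image Fin.val
      = Finset.Ico 0 (u+3) ∪ {v.val + u} := by
  ext a
  rw [mem_image_filter_adj]
  simp only [Finset.mem_union, Finset.mem_Ico, Finset.mem_singleton]
  constructor
  · rintro ⟨hlt, hne, h | h⟩ <;> simp only [rel] at h <;>
      rcases h with h|h|h|h|h|h|h <;> omega
  · intro h
    refine ⟨by omega, by omega, ?_⟩
    simp only [rel]
    rcases h with h | h
    · exact Or.inr (Or.inl ⟨by omega, hv.1, hv.2⟩)
    · exact Or.inl (Or.inr <| Or.inr <| Or.inl ⟨hv.1, hv.2, h⟩)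

lemma deg_r (v : Fin (12*(u+1))) (hv : u+3 ≤ v.val ∧ v.val < 2*u+3) :
    deg (G u) v = u+4 := by
  rw [deg_eq_card, nbhd_r v hv, Finset.card_union_of_disjoint (by
    simp only [Finset.disjoint_left, Finset.mem_Ico, Finset.mem_singleton]; omega)]
  simp [Nat.card_Ico]

lemma nbhd_x (v : Fin (12*(u+1))) (hv : 2*u+3 ≤ v.val ∧ v.val < 3*u+3) :
    (Finset.univ.filter (fun v' => (G u).Adj v v')).image Fin.val
      = (Finset.Ico (3*u+3) (4*u+4) ∪ {5*u+10}) ∪ {v.val - u} := by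
  ext a
  rw [mem_image_filter_adj]
  simp only [Finset.mem_union, Finset.mem_Ico, Finset.mem_singleton]
  constructor
  · rintro ⟨hlt, hne, h | h⟩ <;> simp only [rel] at h <;>
      rcases h with h|h|h|h|h|h|h <;> omega
  · intro h
    refine ⟨by omega, by omega, ?_⟩
    simp only [rel]
    rcases h with (h | h) | h
    · exact Or.inl (Or.inr <| Or.inr <| Or.inr <| Or.inl ⟨hv.1, hv.2, h⟩)
    · exact Or.inl (Or.inr <| Or.inr <| Or.inr <| Or.inr <| Or.inl ⟨hv.1, hv.2, h⟩)
    · exact Or.inr (Or.inr <| Or.inr <| Or.inl ⟨by omega, by omega, by omega⟩)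

lemma deg_x (v : Fin (12*(u+1))) (hv : 2*u+3 ≤ v.val ∧ v.val < 3*u+3) :
    deg (G u) v = u+3 := by
  rw [deg_eq_card, nbhd_x v hv, Finset.card_union_of_disjoint (by
    simp only [Finset.disjoint_left, Finset.mem_union, Finset.mem_Ico, Finset.mem_singleton]
    omega)]
  rw [Finset.card_union_of_disjoint (by
    simp only [Finset.disjoint_left, Finset.mem_Ico, Finset.mem_singleton]; omega)]
  simp [Nat.card_Ico]; omega

lemma nbhd_R (v : Fin (12*(u+1))) (hv : 3*u+3 ≤ v.val ∧ v.val < 4*u+4) :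
    (Finset.univ.filter (fun v' => (G u).Adj v v')).image Fin.val
      = (Finset.Ico (2*u+3) (3*u+3) ∪ {v.val + u + 1}) ∪ {5*u+11} := by
  ext a
  rw [mem_image_filter_adj]
  simp only [Finset.mem_union, Finset.mem_Ico, Finset.mem_singleton]
  constructor
  · rintro ⟨hlt, hne, h | h⟩ <;> simp only [rel] at h <;>
      rcases h with h|h|h|h|h|h|h <;> omega
  · intro h
    refine ⟨by omega, by omega, ?_⟩
    simp only [rel]
    rcases h with (h | h) | h
    · exact Or.inr (Or.inr <| Or.inr <| Or.inr <| Or.inl ⟨h.1, h.2, hv.1, hv.2⟩)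
    · exact Or.inl (Or.inr <| Or.inr <| Or.inr <| Or.inr <| Or.inr <| Or.inl ⟨hv.1, hv.2, by omega⟩)
    · exact Or.inl (Or.inr <| Or.inr <| Or.inr <| Or.inr <| Or.inr <| Or.inr ⟨hv.1, hv.2, h⟩)

lemma deg_R (v : Fin (12*(u+1))) (hv : 3*u+3 ≤ v.val ∧ v.val < 4*u+4) :
    deg (G u) v = u+2 := by
  rw [deg_eq_card, nbhd_R v hv, Finset.card_union_of_disjoint (by
    simp only [Finset.disjoint_left, Finset.mem_union, Finset.mem_Ico, Finset.mem_singleton]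
    omega)]
  rw [Finset.card_union_of_disjoint (by
    simp only [Finset.disjoint_left, Finset.mem_Ico, Finset.mem_singleton]; omega)]
  simp [Nat.card_Ico]; omega

lemma nbhd_X (v : Fin (12*(u+1))) (hv : 4*u+4 ≤ v.val ∧ v.val < 5*u+5) :
    (Finset.univ.filter (fun v' => (G u).Adj v v')).image Fin.val
      = {v.val - (u+1)} := by
  ext a
  rw [mem_image_filter_adj]
  simp only [Finset.mem_singleton]
  constructor
  · rintro ⟨hlt, hne, h | h⟩ <;> simp only [rel] at h <;>
      rcases h with h|h|h|h|h|h|h <;> omega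
  · intro h
    refine ⟨by omega, by omega, ?_⟩
    simp only [rel]
    exact Or.inr (Or.inr <| Or.inr <| Or.inr <| Or.inr <| Or.inr <| Or.inl
      ⟨by omega, by omega, by omega⟩)

lemma deg_X (v : Fin (12*(u+1))) (hv : 4*u+4 ≤ v.val ∧ v.val < 5*u+5) :
    deg (G u) v = 1 := by
  rw [deg_eq_card, nbhd_X v hv]; simp

lemma nbhd_p (v : Fin (12*(u+1))) (hv : 5*u+5 ≤ v.val ∧ v.val < 5*u+10) :
    (Finset.univ.filter (fun v' => (G u).Adj v v')).image Fin.val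
      = Finset.Ico 0 (u+3) := by
  ext a
  rw [mem_image_filter_adj]
  simp only [Finset.mem_Ico]
  constructor
  · rintro ⟨hlt, hne, h | h⟩ <;> simp only [rel] at h <;>
      rcases h with h|h|h|h|h|h|h <;> omega
  · intro h
    refine ⟨by omega, by omega, ?_⟩
    simp only [rel]
    exact Or.inr (Or.inr <| Or.inl ⟨by omega, hv.1, hv.2⟩)

lemma deg_p (v : Fin (12*(u+1))) (hv : 5*u+5 ≤ v.val ∧ v.val < 5*u+10) :
    deg (G u) v = u+3 := by
  rw [deg_eq_card, nbhd_p v hv]; simp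

lemma nbhd_y (v : Fin (12*(u+1))) (hv : v.val = 5*u+10) :
    (Finset.univ.filter (fun v' => (G u).Adj v v')).image Fin.val
      = Finset.Ico (2*u+3) (3*u+3) := by
  ext a
  rw [mem_image_filter_adj]
  simp only [Finset.mem_Ico]
  constructor
  · rintro ⟨hlt, hne, h | h⟩ <;> simp only [rel] at h <;>
      rcases h with h|h|h|h|h|h|h <;> omega
  · intro h
    refine ⟨by omega, by omega, ?_⟩
    simp only [rel]
    exact Or.inr (Or.inr <| Or.inr <| Or.inr <| Or.inr <| Or.inl ⟨h.1, h.2, by omega⟩)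

lemma deg_y (v : Fin (12*(u+1))) (hv : v.val = 5*u+10) : deg (G u) v = u := by
  rw [deg_eq_card, nbhd_y v hv]; simp [Nat.card_Ico]; omega

lemma nbhd_z (v : Fin (12*(u+1))) (hv : v.val = 5*u+11) :
    (Finset.univ.filter (fun v' => (G u).Adj v v')).image Fin.val
      = Finset.Ico (3*u+3) (4*u+4) := by
  ext a
  rw [mem_image_filter_adj]
  simp only [Finset.mem_Ico]
  constructor
  · rintro ⟨hlt, hne, h | h⟩ <;> simp only [rel] at h <;>
      rcases h with h|h|h|h|h|h|h <;> omega
  · intro h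
    refine ⟨by omega, by omega, ?_⟩
    simp only [rel]
    exact Or.inr (Or.inr <| Or.inr <| Or.inr <| Or.inr <| Or.inr <| Or.inr ⟨h.1, h.2, by omega⟩)

lemma deg_z (v : Fin (12*(u+1))) (hv : v.val = 5*u+11) : deg (G u) v = u+1 := by
  rw [deg_eq_card, nbhd_z v hv]; simp [Nat.card_Ico]; omega

lemma nbhd_filler (v : Fin (12*(u+1))) (hv : 5*u+12 ≤ v.val) :
    (Finset.univ.filter (fun v' => (G u).Adj v v')).image Fin.val = ∅ := by
  ext a
  rw [mem_image_filter_adj]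
  simp only [Finset.notMem_empty, iff_false]
  rintro ⟨hlt, hne, h | h⟩ <;> simp only [rel] at h <;>
    rcases h with h|h|h|h|h|h|h <;> omega

lemma deg_filler (v : Fin (12*(u+1))) (hv : 5*u+12 ≤ v.val) : deg (G u) v = 0 := by
  rw [deg_eq_card, nbhd_filler v hv]; simp

lemma deg_le (v : Fin (12*(u+1))) : deg (G u) v ≤ u+5 := by
  rcases Nat.lt_or_ge v.val (u+3) with h | h
  · rw [deg_ld v h]
  rcases Nat.lt_or_ge v.val (2*u+3) with h2 | h2
  · rw [deg_r v ⟨h, h2⟩]; omega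
  rcases Nat.lt_or_ge v.val (3*u+3) with h3 | h3
  · rw [deg_x v ⟨h2, h3⟩]; omega
  rcases Nat.lt_or_ge v.val (4*u+4) with h4 | h4
  · rw [deg_R v ⟨h3, h4⟩]; omega
  rcases Nat.lt_or_ge v.val (5*u+5) with h5 | h5
  · rw [deg_X v ⟨h4, h5⟩]; omega
  rcases Nat.lt_or_ge v.val (5*u+10) with h6 | h6
  · rw [deg_p v ⟨h5, h6⟩]; omega
  rcases Nat.lt_or_ge v.val (5*u+11) with h7 | h7
  · rw [deg_y v (by omega)]; omega
  rcases Nat.lt_or_ge v.val (5*u+12) with h8 | h8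
  · rw [deg_z v (by omega)]; omega
  · rw [deg_filler v (by omega)]; omega

lemma maxDeg_G : maxDeg (G u) = u+5 := by
  apply le_antisymm
  · exact Finset.sup_le (fun v _ => deg_le v)
  · have h : deg (G u) (ldV u 0) = u+5 := deg_ld _ (by rw [ldV_val (by omega)]; omega)
    rw [← h]
    exact Finset.le_sup (Finset.mem_univ _)

end AMIS
namespace AMIS

variable {u : ℕ}

def yV (u : ℕ) : Fin (12*(u+1)) := mk u (5*u+10)
def zV (u : ℕ) : Fin (12*(u+1)) := mk u (5*u+11)
lemma yV_val : (yV u).val = 5*u+10 := mk_val (by omega)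
lemma zV_val : (zV u).val = 5*u+11 := mk_val (by omega)

lemma adj_ld_cases {j : ℕ} (hj : j < u+3) {v' : Fin (12*(u+1))}
    (h : (G u).Adj (ldV u j) v') :
    (∃ i, i < u ∧ v' = rV u i) ∨ (∃ t, t < 5 ∧ v' = pV u t) := by
  obtain ⟨hne, hr⟩ := (adj_iff _ _).1 h
  rw [ldV_val hj] at hne hr
  rcases hr with h' | h' <;> simp only [rel] at h' <;>
    rcases h' with h'|h'|h'|h'|h'|h'|h'
  all_goals first
    | (exact Or.inl ⟨v'.val - (u+3), by omega, Fin.ext (by rw [rV_val (by omega)]; omega)⟩)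
    | (exact Or.inr ⟨v'.val - (5*u+5), by omega, Fin.ext (by rw [pV_val (by omega)]; omega)⟩)
    | omega

lemma adj_r_cases {i : ℕ} (hi : i < u) {v' : Fin (12*(u+1))}
    (h : (G u).Adj (rV u i) v') :
    (∃ j, j < u+3 ∧ v' = ldV u j) ∨ v' = xV u i := by
  obtain ⟨hne, hr⟩ := (adj_iff _ _).1 h
  rw [rV_val hi] at hne hr
  rcases hr with h' | h' <;> simp only [rel] at h' <;>
    rcases h' with h'|h'|h'|h'|h'|h'|h'
  all_goals first
    | (exact Or.inl ⟨v'.val, by omega, Fin.ext (by rw [ldV_val (by omega)])⟩)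
    | (exact Or.inr (Fin.ext (by rw [xV_val (by omega)]; omega)))
    | omega

lemma adj_x_cases {i : ℕ} (hi : i < u) {v' : Fin (12*(u+1))}
    (h : (G u).Adj (xV u i) v') :
    v' = rV u i ∨ (∃ k, k < u+1 ∧ v' = RV u k) ∨ v' = yV u := by
  obtain ⟨hne, hr⟩ := (adj_iff _ _).1 h
  rw [xV_val hi] at hne hr
  rcases hr with h' | h' <;> simp only [rel] at h' <;>
    rcases h' with h'|h'|h'|h'|h'|h'|h'
  all_goals first
    | (exact Or.inl (Fin.ext (by rw [rV_val (by omega)]; omega)))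
    | (exact Or.inr <| Or.inl ⟨v'.val - (3*u+3), by omega,
        Fin.ext (by rw [RV_val (by omega)]; omega)⟩)
    | (exact Or.inr <| Or.inr (Fin.ext (by rw [yV_val]; omega)))
    | omega

lemma adj_R_cases {k : ℕ} (hk : k < u+1) {v' : Fin (12*(u+1))}
    (h : (G u).Adj (RV u k) v') :
    (∃ i, i < u ∧ v' = xV u i) ∨ v' = XV u k ∨ v' = zV u := by
  obtain ⟨hne, hr⟩ := (adj_iff _ _).1 h
  rw [RV_val hk] at hne hr
  rcases hr with h' | h' <;> simp only [rel] at h' <;>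
    rcases h' with h'|h'|h'|h'|h'|h'|h'
  all_goals first
    | (exact Or.inl ⟨v'.val - (2*u+3), by omega, Fin.ext (by rw [xV_val (by omega)]; omega)⟩)
    | (exact Or.inr <| Or.inl (Fin.ext (by rw [XV_val (by omega)]; omega)))
    | (exact Or.inr <| Or.inr (Fin.ext (by rw [zV_val]; omega)))
    | omega

lemma adj_X_cases {k : ℕ} (hk : k < u+1) {v' : Fin (12*(u+1))}
    (h : (G u).Adj (XV u k) v') : v' = RV u k := by
  obtain ⟨hne, hr⟩ := (adj_iff _ _).1 h
  rw [XV_val hk] at hne hr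
  rcases hr with h' | h' <;> simp only [rel] at h' <;>
    rcases h' with h'|h'|h'|h'|h'|h'|h'
  all_goals first
    | (exact Fin.ext (by rw [RV_val (by omega)]; omega))
    | omega

/-- adjacency facts used as R2 witnesses -/
lemma adj_ld_r {j i : ℕ} (hj : j < u+3) (hi : i < u) : (G u).Adj (ldV u j) (rV u i) := by
  rw [adj_iff, ldV_val hj, rV_val hi]
  exact ⟨by omega, Or.inl (Or.inl ⟨by omega, by omega, by omega⟩)⟩

lemma adj_r_x {i : ℕ} (hi : i < u) : (G u).Adj (rV u i) (xV u i) := by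
  rw [adj_iff, rV_val hi, xV_val hi]
  refine ⟨by omega, Or.inl ?_⟩
  simp only [rel]
  exact Or.inr <| Or.inr <| Or.inl ⟨by omega, by omega, by omega⟩

lemma adj_x_R {i k : ℕ} (hi : i < u) (hk : k < u+1) : (G u).Adj (xV u i) (RV u k) := by
  rw [adj_iff, xV_val hi, RV_val hk]
  refine ⟨by omega, Or.inl ?_⟩
  simp only [rel]
  exact Or.inr <| Or.inr <| Or.inr <| Or.inl ⟨by omega, by omega, by omega, by omega⟩

lemma adj_R_X {k : ℕ} (hk : k < u+1) : (G u).Adj (RV u k) (XV u k) := by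
  rw [adj_iff, RV_val hk, XV_val hk]
  refine ⟨by omega, Or.inl ?_⟩
  simp only [rel]
  exact Or.inr <| Or.inr <| Or.inr <| Or.inr <| Or.inr <| Or.inl ⟨by omega, by omega, by omega⟩

/-- configuration built from component functions -/
def conf (u : ℕ) (fL fr fx fR fX : ℕ → Bool) : Fin (12*(u+1)) → Bool := fun v =>
  if v.val < u+3 then fL v.val
  else if v.val < 2*u+3 then fr (v.val - (u+3))
  else if v.val < 3*u+3 then fx (v.val - (2*u+3))
  else if v.val < 4*u+4 then fR (v.val - (3*u+3))
  else if v.val < 5*u+5 then fX (v.val - (4*u+4))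
  else false

variable {fL fr fx fR fX : ℕ → Bool}

lemma conf_ld {j : ℕ} (hj : j < u+3) : conf u fL fr fx fR fX (ldV u j) = fL j := by
  unfold conf; rw [ldV_val hj, if_pos hj]

lemma conf_r {i : ℕ} (hi : i < u) : conf u fL fr fx fR fX (rV u i) = fr i := by
  unfold conf; rw [rV_val hi, if_neg (by omega), if_pos (by omega)]
  congr 1; omega

lemma conf_x {i : ℕ} (hi : i < u) : conf u fL fr fx fR fX (xV u i) = fx i := by
  unfold conf; rw [xV_val hi, if_neg (by omega), if_neg (by omega), if_pos (by omega)]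
  congr 1; omega

lemma conf_R {k : ℕ} (hk : k < u+1) : conf u fL fr fx fR fX (RV u k) = fR k := by
  unfold conf
  rw [RV_val hk, if_neg (by omega), if_neg (by omega), if_neg (by omega), if_pos (by omega)]
  congr 1; omega

lemma conf_X {k : ℕ} (hk : k < u+1) : conf u fL fr fx fR fX (XV u k) = fX k := by
  unfold conf
  rw [XV_val hk, if_neg (by omega), if_neg (by omega), if_neg (by omega), if_neg (by omega),
    if_pos (by omega)]
  congr 1; omega

lemma conf_p {t : ℕ} (ht : t < 5) : conf u fL fr fx fR fX (pV u t) = false := by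
  unfold conf
  rw [pV_val ht, if_neg (by omega), if_neg (by omega), if_neg (by omega), if_neg (by omega),
    if_neg (by omega)]

lemma conf_y : conf u fL fr fx fR fX (yV u) = false := by
  unfold conf
  rw [yV_val, if_neg (by omega), if_neg (by omega), if_neg (by omega), if_neg (by omega),
    if_neg (by omega)]

lemma conf_z : conf u fL fr fx fR fX (zV u) = false := by
  unfold conf
  rw [zV_val, if_neg (by omega), if_neg (by omega), if_neg (by omega), if_neg (by omega),
    if_neg (by omega)]

end AMIS
namespace AMIS

variable {u : ℕ} {fL fr fx fR fX : ℕ → Bool}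

lemma update_ld {j : ℕ} {b : Bool} (hj : j < u+3) :
    Function.update (conf u fL fr fx fR fX) (ldV u j) b
      = conf u (Function.update fL j b) fr fx fR fX := by
  funext v
  rw [Function.update_apply]
  by_cases hv : v = ldV u j
  · rw [if_pos hv, hv, conf_ld hj, Function.update_self]
  · rw [if_neg hv]
    show _ = conf u (Function.update fL j b) fr fx fR fX v
    unfold conf
    split_ifs <;> try rfl
    exact (Function.update_of_ne
      (fun hh => hv (Fin.ext (by rw [ldV_val hj]; omega))) _ _).symm

lemma update_r {i : ℕ} {b : Bool} (hi : i < u) :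
    Function.update (conf u fL fr fx fR fX) (rV u i) b
      = conf u fL (Function.update fr i b) fx fR fX := by
  funext v
  rw [Function.update_apply]
  by_cases hv : v = rV u i
  · rw [if_pos hv, hv, conf_r hi, Function.update_self]
  · rw [if_neg hv]
    show _ = conf u fL (Function.update fr i b) fx fR fX v
    unfold conf
    split_ifs <;> try rfl
    exact (Function.update_of_ne
      (fun hh => hv (Fin.ext (by rw [rV_val hi]; omega))) _ _).symm

lemma update_x {i : ℕ} {b : Bool} (hi : i < u) :
    Function.update (conf u fL fr fx fR fX) (xV u i) b
      = conf u fL fr (Function.update fx i b) fR fX := by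
  funext v
  rw [Function.update_apply]
  by_cases hv : v = xV u i
  · rw [if_pos hv, hv, conf_x hi, Function.update_self]
  · rw [if_neg hv]
    show _ = conf u fL fr (Function.update fx i b) fR fX v
    unfold conf
    split_ifs <;> try rfl
    exact (Function.update_of_ne
      (fun hh => hv (Fin.ext (by rw [xV_val hi]; omega))) _ _).symm

lemma update_R {k : ℕ} {b : Bool} (hk : k < u+1) :
    Function.update (conf u fL fr fx fR fX) (RV u k) b
      = conf u fL fr fx (Function.update fR k b) fX := by
  funext v
  rw [Function.update_apply]
  by_cases hv : v = RV u k
  · rw [if_pos hv, hv, conf_R hk, Function.update_self]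
  · rw [if_neg hv]
    show _ = conf u fL fr fx (Function.update fR k b) fX v
    unfold conf
    split_ifs <;> try rfl
    exact (Function.update_of_ne
      (fun hh => hv (Fin.ext (by rw [RV_val hk]; omega))) _ _).symm

lemma update_X {k : ℕ} {b : Bool} (hk : k < u+1) :
    Function.update (conf u fL fr fx fR fX) (XV u k) b
      = conf u fL fr fx fR (Function.update fX k b) := by
  funext v
  rw [Function.update_apply]
  by_cases hv : v = XV u k
  · rw [if_pos hv, hv, conf_X hk, Function.update_self]
  · rw [if_neg hv]
    show _ = conf u fL fr fx fR (Function.update fX k b) v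
    unfold conf
    split_ifs <;> try rfl
    exact (Function.update_of_ne
      (fun hh => hv (Fin.ext (by rw [XV_val hk]; omega))) _ _).symm

/-- validity of a list of flips -/
def ValidL (u : ℕ) (s : Fin (12*(u+1)) → Bool) : List (Fin (12*(u+1))) → Prop
  | [] => True
  | v :: t => Enabled (G u) s v ∧ ValidL u (Function.update s v (!s v)) t

def applyL (u : ℕ) (s : Fin (12*(u+1)) → Bool) (l : List (Fin (12*(u+1)))) :
    Fin (12*(u+1)) → Bool :=
  l.foldl (fun s v => Function.update s v (!s v)) s

@[simp] lemma applyL_nil (s : Fin (12*(u+1)) → Bool) : applyL u s [] = s := rfl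

@[simp] lemma applyL_cons (s : Fin (12*(u+1)) → Bool) (v : Fin (12*(u+1))) (l) :
    applyL u s (v :: l) = applyL u (Function.update s v (!s v)) l := rfl

lemma applyL_append (s : Fin (12*(u+1)) → Bool) (l₁ l₂ : List (Fin (12*(u+1)))) :
    applyL u s (l₁ ++ l₂) = applyL u (applyL u s l₁) l₂ := by
  unfold applyL; rw [List.foldl_append]

@[simp] lemma validL_nil (s : Fin (12*(u+1)) → Bool) : ValidL u s [] := trivial

lemma validL_append {s : Fin (12*(u+1)) → Bool} {l₁ l₂ : List (Fin (12*(u+1)))}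
    (h₁ : ValidL u s l₁) (h₂ : ValidL u (applyL u s l₁) l₂) : ValidL u s (l₁ ++ l₂) := by
  induction l₁ generalizing s with
  | nil => simpa using h₂
  | cons v t ih =>
    obtain ⟨he, ht⟩ := h₁
    exact ⟨he, ih ht (by simpa using h₂)⟩

lemma move_of_validL {s : Fin (12*(u+1)) → Bool} {l : List (Fin (12*(u+1)))}
    (h : ValidL u s l) :
    ∀ i < l.length, Move (G u) (applyL u s (l.take i)) (applyL u s (l.take (i+1))) := by
  induction l generalizing s with
  | nil => intro i hi; simp at hi
  | cons v t ih =>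
    intro i hi
    obtain ⟨he, ht⟩ := h
    cases i with
    | zero =>
      refine ⟨v, he, ?_⟩
      simp [applyL]
    | succ i =>
      have := ih ht i (by simpa using hi)
      simpa [applyL] using this

end AMIS
namespace AMIS

variable {u : ℕ} {fL fr fx fR fX : ℕ → Bool}

lemma ld_in_range {j : ℕ} (hj : j < u+3) : (ldV u j).val < u+3 := by rw [ldV_val hj]; omega
lemma r_in_range {i : ℕ} (hi : i < u) :
    u+3 ≤ (rV u i).val ∧ (rV u i).val < 2*u+3 := by rw [rV_val hi]; omega
lemma x_in_range {i : ℕ} (hi : i < u) :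
    2*u+3 ≤ (xV u i).val ∧ (xV u i).val < 3*u+3 := by rw [xV_val hi]; omega
lemma R_in_range {k : ℕ} (hk : k < u+1) :
    3*u+3 ≤ (RV u k).val ∧ (RV u k).val < 4*u+4 := by rw [RV_val hk]; omega
lemma X_in_range {k : ℕ} (hk : k < u+1) :
    4*u+4 ≤ (XV u k).val ∧ (XV u k).val < 5*u+5 := by rw [XV_val hk]; omega

lemma enabled_ld_in {j : ℕ} (hj : j < u+3) (h0 : fL j = false)
    (hr : ∀ i, i < u → fr i = false) :
    Enabled (G u) (conf u fL fr fx fR fX) (ldV u j) := by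
  left
  refine ⟨by rw [conf_ld hj, h0], ?_⟩
  intro v' hadj _
  rcases adj_ld_cases hj hadj with ⟨i, hi, rfl⟩ | ⟨t, ht, rfl⟩
  · rw [conf_r hi]; exact hr i hi
  · exact conf_p ht

lemma enabled_ld_out {j : ℕ} (hj : j < u+3) (h1 : fL j = true)
    {i : ℕ} (hi : i < u) (hri : fr i = true) :
    Enabled (G u) (conf u fL fr fx fR fX) (ldV u j) := by
  right
  refine ⟨by rw [conf_ld hj, h1], rV u i, adj_ld_r hj hi, ?_, by rw [conf_r hi, hri]⟩
  rw [deg_r _ (r_in_range hi), deg_ld _ (ld_in_range hj)]; omega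

lemma enabled_r_in {i : ℕ} (hi : i < u) (h0 : fr i = false) (hx : fx i = false) :
    Enabled (G u) (conf u fL fr fx fR fX) (rV u i) := by
  left
  refine ⟨by rw [conf_r hi, h0], ?_⟩
  intro v' hadj hdeg
  rcases adj_r_cases hi hadj with ⟨j, hj, rfl⟩ | rfl
  · rw [deg_ld _ (ld_in_range hj), deg_r _ (r_in_range hi)] at hdeg; omega
  · rw [conf_x hi]; exact hx

lemma enabled_r_out {i : ℕ} (hi : i < u) (h1 : fr i = true) (hx : fx i = true) :
    Enabled (G u) (conf u fL fr fx fR fX) (rV u i) := by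
  right
  refine ⟨by rw [conf_r hi, h1], xV u i, adj_r_x hi, ?_, by rw [conf_x hi, hx]⟩
  rw [deg_x _ (x_in_range hi), deg_r _ (r_in_range hi)]; omega

lemma enabled_x_in {i : ℕ} (hi : i < u) (h0 : fx i = false)
    (hR : ∀ k, k < u+1 → fR k = false) :
    Enabled (G u) (conf u fL fr fx fR fX) (xV u i) := by
  left
  refine ⟨by rw [conf_x hi, h0], ?_⟩
  intro v' hadj hdeg
  rcases adj_x_cases hi hadj with rfl | ⟨k, hk, rfl⟩ | rfl
  · rw [deg_r _ (r_in_range hi), deg_x _ (x_in_range hi)] at hdeg; omega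
  · rw [conf_R hk]; exact hR k hk
  · exact conf_y

lemma enabled_x_out {i : ℕ} (hi : i < u) (h1 : fx i = true)
    {k : ℕ} (hk : k < u+1) (hRk : fR k = true) :
    Enabled (G u) (conf u fL fr fx fR fX) (xV u i) := by
  right
  refine ⟨by rw [conf_x hi, h1], RV u k, adj_x_R hi hk, ?_, by rw [conf_R hk, hRk]⟩
  rw [deg_R _ (R_in_range hk), deg_x _ (x_in_range hi)]; omega

lemma enabled_R_in {k : ℕ} (hk : k < u+1) (h0 : fR k = false) (hX : fX k = false) :
    Enabled (G u) (conf u fL fr fx fR fX) (RV u k) := by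
  left
  refine ⟨by rw [conf_R hk, h0], ?_⟩
  intro v' hadj hdeg
  rcases adj_R_cases hk hadj with ⟨i, hi, rfl⟩ | rfl | rfl
  · rw [deg_x _ (x_in_range hi), deg_R _ (R_in_range hk)] at hdeg; omega
  · rw [conf_X hk]; exact hX
  · exact conf_z

lemma enabled_R_out {k : ℕ} (hk : k < u+1) (h1 : fR k = true) (hX : fX k = true) :
    Enabled (G u) (conf u fL fr fx fR fX) (RV u k) := by
  right
  refine ⟨by rw [conf_R hk, h1], XV u k, adj_R_X hk, ?_, by rw [conf_X hk, hX]⟩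
  rw [deg_X _ (X_in_range hk), deg_R _ (R_in_range hk)]; omega

lemma enabled_X_in {k : ℕ} (hk : k < u+1) (h0 : fX k = false) :
    Enabled (G u) (conf u fL fr fx fR fX) (XV u k) := by
  left
  refine ⟨by rw [conf_X hk, h0], ?_⟩
  intro v' hadj hdeg
  rcases adj_X_cases hk hadj with rfl
  rw [deg_R _ (R_in_range hk), deg_X _ (X_in_range hk)] at hdeg; omega

end AMIS
namespace AMIS

variable {u : ℕ} {fL fr fx fR fX : ℕ → Bool}

def cTrue : ℕ → Bool := fun _ => true
def cFalse : ℕ → Bool := fun _ => false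
def cLt (c : ℕ) : ℕ → Bool := fun a => decide (a < c)
def cGe (c : ℕ) : ℕ → Bool := fun a => decide (c ≤ a)

lemma cLt_zero : cLt 0 = cFalse := funext fun a => by simp [cLt, cFalse]
lemma cGe_zero : cGe 0 = cTrue := funext fun a => by simp [cGe, cTrue]
lemma cLt_succ (c : ℕ) : Function.update (cLt c) c true = cLt (c+1) := by
  funext a
  rcases eq_or_ne a c with rfl | h
  · simp [cLt]
  · rw [Function.update_of_ne h]; simp only [cLt]
    rcases Nat.lt_or_ge a c with h' | h' <;> simp <;> omega
lemma cGe_succ (c : ℕ) : Function.update (cGe c) c false = cGe (c+1) := by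
  funext a
  rcases eq_or_ne a c with rfl | h
  · simp [cGe]
  · rw [Function.update_of_ne h]; simp only [cGe]
    rcases Nat.lt_or_ge a c with h' | h' <;> simp <;> omega
lemma updud (i : ℕ) :
    Function.update (Function.update cFalse i true) i false = cFalse := by
  funext a
  rcases eq_or_ne a i with rfl | h
  · simp [cFalse]
  · rw [Function.update_of_ne h, Function.update_of_ne h]

/-- conf only depends on components in relevant ranges -/
lemma conf_congr {fL' fr' fx' fR' fX' : ℕ → Bool}
    (h1 : ∀ a, a < u+3 → fL a = fL' a) (h2 : ∀ a, a < u → fr a = fr' a)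
    (h3 : ∀ a, a < u → fx a = fx' a) (h4 : ∀ a, a < u+1 → fR a = fR' a)
    (h5 : ∀ a, a < u+1 → fX a = fX' a) :
    conf u fL fr fx fR fX = conf u fL' fr' fx' fR' fX' := by
  funext v
  unfold conf
  split_ifs with g1 g2 g3 g4 g5
  · exact h1 _ (by omega)
  · exact h2 _ (by omega)
  · exact h3 _ (by omega)
  · exact h4 _ (by omega)
  · exact h5 _ (by omega)
  · rfl

def Runs (u : ℕ) (s : Fin (12*(u+1)) → Bool) (l : List (Fin (12*(u+1))))
    (t : Fin (12*(u+1)) → Bool) : Prop :=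
  ValidL u s l ∧ applyL u s l = t

lemma runs_nil (s : Fin (12*(u+1)) → Bool) : Runs u s [] s := ⟨trivial, rfl⟩

lemma runs_append {s t r : Fin (12*(u+1)) → Bool} {l₁ l₂}
    (h₁ : Runs u s l₁ t) (h₂ : Runs u t l₂ r) : Runs u s (l₁ ++ l₂) r := by
  refine ⟨validL_append h₁.1 ?_, ?_⟩
  · rw [h₁.2]; exact h₂.1
  · rw [applyL_append, h₁.2]; exact h₂.2

lemma runs_cons {s t : Fin (12*(u+1)) → Bool} {v l}
    (he : Enabled (G u) s v) (hupd : Function.update s v (!s v) = t') (h : Runs u t' l t) :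
    Runs u s (v :: l) t := by
  refine ⟨⟨he, ?_⟩, ?_⟩
  · rw [hupd]; exact h.1
  · rw [applyL_cons, hupd]; exact h.2

lemma runs_single {s t : Fin (12*(u+1)) → Bool} {v}
    (he : Enabled (G u) s v) (hupd : Function.update s v (!s v) = t) :
    Runs u s [v] t := runs_cons he hupd (runs_nil t)

lemma runs_congr {s l t t'} (h : Runs u s l t) (he : t = t') : Runs u s l t' := he ▸ h

/-- list of all load vertices -/
def loadsL (u : ℕ) : List (Fin (12*(u+1))) := (List.range (u+3)).map (ldV u)
def xsL (u : ℕ) : List (Fin (12*(u+1))) := (List.range u).map (xV u)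

lemma fill_aux (hr : ∀ i, i < u → fr i = false) :
    ∀ c, c ≤ u+3 → Runs u (conf u cFalse fr fx fR fX) ((List.range c).map (ldV u))
      (conf u (cLt c) fr fx fR fX) := by
  intro c
  induction c with
  | zero => intro _; rw [cLt_zero]; exact runs_nil _
  | succ c ih =>
    intro hc
    rw [List.range_succ, List.map_append]
    refine runs_append (ih (by omega)) ?_
    refine runs_single (enabled_ld_in (by omega) (by simp [cLt]) hr) ?_
    have h1 : conf u (cLt c) fr fx fR fX (ldV u c) = false := by
      rw [conf_ld (by omega)]; simp [cLt]
    rw [h1, Bool.not_false, update_ld (by omega), cLt_succ]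

lemma fill_spec (hr : ∀ i, i < u → fr i = false) :
    Runs u (conf u cFalse fr fx fR fX) (loadsL u) (conf u cTrue fr fx fR fX) := by
  refine runs_congr (fill_aux hr (u+3) le_rfl) ?_
  refine conf_congr (fun a ha => ?_) (fun _ _ => rfl) (fun _ _ => rfl)
    (fun _ _ => rfl) (fun _ _ => rfl)
  simp [cLt, cTrue]; omega

lemma drain_aux {i0 : ℕ} (hi0 : i0 < u) (hri : fr i0 = true) :
    ∀ c, c ≤ u+3 → Runs u (conf u cTrue fr fx fR fX) ((List.range c).map (ldV u))
      (conf u (cGe c) fr fx fR fX) := by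
  intro c
  induction c with
  | zero => intro _; rw [cGe_zero]; exact runs_nil _
  | succ c ih =>
    intro hc
    rw [List.range_succ, List.map_append]
    refine runs_append (ih (by omega)) ?_
    refine runs_single (enabled_ld_out (by omega) (by simp [cGe]) hi0 hri) ?_
    have h1 : conf u (cGe c) fr fx fR fX (ldV u c) = true := by
      rw [conf_ld (by omega)]; simp [cGe]
    rw [h1, Bool.not_true, update_ld (by omega), cGe_succ]

lemma drain_spec {i0 : ℕ} (hi0 : i0 < u) (hri : fr i0 = true) :
    Runs u (conf u cTrue fr fx fR fX) (loadsL u) (conf u cFalse fr fx fR fX) := by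
  refine runs_congr (drain_aux hi0 hri (u+3) le_rfl) ?_
  refine conf_congr (fun a ha => ?_) (fun _ _ => rfl) (fun _ _ => rfl)
    (fun _ _ => rfl) (fun _ _ => rfl)
  simp [cGe, cFalse]; omega

lemma drainX_aux {k0 : ℕ} (hk0 : k0 < u+1) (hRk : fR k0 = true) :
    ∀ c, c ≤ u → Runs u (conf u fL fr cTrue fR fX) ((List.range c).map (xV u))
      (conf u fL fr (cGe c) fR fX) := by
  intro c
  induction c with
  | zero => intro _; rw [cGe_zero]; exact runs_nil _
  | succ c ih =>
    intro hc
    rw [List.range_succ, List.map_append]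
    refine runs_append (ih (by omega)) ?_
    refine runs_single (enabled_x_out (by omega) (by simp [cGe]) hk0 hRk) ?_
    have h1 : conf u fL fr (cGe c) fR fX (xV u c) = true := by
      rw [conf_x (by omega)]; simp [cGe]
    rw [h1, Bool.not_true, update_x (by omega), cGe_succ]

lemma drainX_spec {k0 : ℕ} (hk0 : k0 < u+1) (hRk : fR k0 = true) :
    Runs u (conf u fL fr cTrue fR fX) (xsL u) (conf u fL fr cFalse fR fX) := by
  refine runs_congr (drainX_aux hk0 hRk u le_rfl) ?_
  refine conf_congr (fun _ _ => rfl) (fun _ _ => rfl) (fun a ha => ?_)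
    (fun _ _ => rfl) (fun _ _ => rfl)
  simp [cGe, cFalse]; omega

end AMIS
namespace AMIS

variable {u : ℕ} {fL fr fx fR fX : ℕ → Bool}

def innerL (u i : ℕ) : List (Fin (12*(u+1))) :=
  rV u i :: (loadsL u ++ (xV u i :: rV u i :: loadsL u))

lemma inner_spec {i : ℕ} (hi : i < u) :
    Runs u (conf u cTrue cFalse (cLt i) cFalse fX) (innerL u i)
      (conf u cTrue cFalse (cLt (i+1)) cFalse fX) := by
  unfold innerL
  refine runs_cons (enabled_r_in hi rfl (by simp [cLt]))
    (t' := conf u cTrue (Function.update cFalse i true) (cLt i) cFalse fX) ?_ ?_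
  · rw [conf_r hi]
    rw [show (!cFalse i) = true from rfl, update_r hi]
  refine runs_append (drain_spec hi (Function.update_self i true cFalse)) ?_
  refine runs_cons (enabled_x_in hi (by simp [cLt]) (fun _ _ => rfl))
    (t' := conf u cFalse (Function.update cFalse i true) (cLt (i+1)) cFalse fX) ?_ ?_
  · rw [conf_x hi]
    rw [show (!cLt i i) = true by simp [cLt], update_x hi, cLt_succ]
  refine runs_cons (enabled_r_out hi (Function.update_self i true cFalse) (by simp [cLt]))
    (t' := conf u cFalse cFalse (cLt (i+1)) cFalse fX) ?_ ?_
  · rw [conf_r hi, Function.update_self]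
    rw [show (!true) = false from rfl, update_r hi, updud]
  exact fill_spec (fun _ _ => rfl)

def blockL (u : ℕ) : ℕ → List (Fin (12*(u+1)))
  | 0 => []
  | c+1 => blockL u c ++ innerL u c

lemma block_spec : ∀ c, c ≤ u →
    Runs u (conf u cTrue cFalse (cLt 0) cFalse fX) (blockL u c)
      (conf u cTrue cFalse (cLt c) cFalse fX) := by
  intro c
  induction c with
  | zero => intro _; exact runs_nil _
  | succ c ih =>
    intro hc
    exact runs_append (ih (by omega)) (inner_spec (by omega))

def outerL (u k : ℕ) : List (Fin (12*(u+1))) :=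
  RV u k :: (xsL u ++ (XV u k :: RV u k :: []))

lemma outer_spec {k : ℕ} (hk : k < u+1) :
    Runs u (conf u cTrue cFalse (cLt u) cFalse (cLt k)) (outerL u k)
      (conf u cTrue cFalse (cLt 0) cFalse (cLt (k+1))) := by
  unfold outerL
  refine runs_cons (enabled_R_in hk rfl (by simp [cLt]))
    (t' := conf u cTrue cFalse cTrue (Function.update cFalse k true) (cLt k)) ?_ ?_
  · rw [conf_R hk]
    rw [show (!cFalse k) = true from rfl, update_R hk]
    refine conf_congr (fun _ _ => rfl) (fun _ _ => rfl) (fun a ha => ?_)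
      (fun _ _ => rfl) (fun _ _ => rfl)
    simp [cLt, cTrue]; omega
  refine runs_append (drainX_spec hk (Function.update_self k true cFalse)) ?_
  refine runs_cons (enabled_X_in hk (by simp [cLt]))
    (t' := conf u cTrue cFalse cFalse (Function.update cFalse k true) (cLt (k+1))) ?_ ?_
  · rw [conf_X hk]
    rw [show (!cLt k k) = true by simp [cLt], update_X hk, cLt_succ]
  refine runs_cons (enabled_R_out hk (Function.update_self k true cFalse) (by simp [cLt]))
    (t' := conf u cTrue cFalse (cLt 0) cFalse (cLt (k+1))) ?_ ?_
  · rw [conf_R hk, Function.update_self]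
    rw [show (!true) = false from rfl, update_R hk, updud, cLt_zero]
  exact runs_nil _

def mainL (u : ℕ) : ℕ → List (Fin (12*(u+1)))
  | 0 => []
  | c+1 => mainL u c ++ (outerL u c ++ blockL u u)

lemma main_spec : ∀ c, c ≤ u+1 →
    Runs u (conf u cTrue cFalse (cLt u) cFalse (cLt 0)) (mainL u c)
      (conf u cTrue cFalse (cLt u) cFalse (cLt c)) := by
  intro c
  induction c with
  | zero => intro _; exact runs_nil _
  | succ c ih =>
    intro hc
    refine runs_append (ih (by omega)) (runs_append (outer_spec (by omega)) ?_)
    exact block_spec u le_rfl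

def grandL (u : ℕ) : List (Fin (12*(u+1))) :=
  loadsL u ++ (blockL u u ++ mainL u (u+1))

lemma conf_allFalse : conf u cFalse cFalse cFalse cFalse cFalse = fun _ => false := by
  funext v; unfold conf; split_ifs <;> rfl

lemma grand_spec :
    Runs u (fun _ => false) (grandL u)
      (conf u cTrue cFalse (cLt u) cFalse (cLt (u+1))) := by
  unfold grandL
  rw [← conf_allFalse]
  refine runs_append (fill_spec (fun _ _ => rfl)) ?_
  rw [show (cFalse : ℕ → Bool) = cLt 0 from cLt_zero.symm]
  exact runs_append (block_spec u le_rfl) (main_spec (u+1) le_rfl)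

lemma loadsL_length : (loadsL u).length = u+3 := by simp [loadsL]
lemma xsL_length : (xsL u).length = u := by simp [xsL]
lemma innerL_length {i : ℕ} : (innerL u i).length = 2*u+9 := by
  simp [innerL, loadsL_length]; omega
lemma blockL_length : ∀ c, (blockL u c).length = c*(2*u+9) := by
  intro c
  induction c with
  | zero => simp [blockL]
  | succ c ih =>
    show (blockL u c ++ innerL u c).length = _
    rw [List.length_append, ih, innerL_length]; ring
lemma outerL_length {k : ℕ} : (outerL u k).length = u+3 := by
  simp [outerL, xsL_length]
lemma mainL_length : ∀ c, (mainL u c).length = c*((u+3) + u*(2*u+9)) := by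
  intro c
  induction c with
  | zero => simp [mainL]
  | succ c ih =>
    show (mainL u c ++ (outerL u c ++ blockL u u)).length = _
    rw [List.length_append, List.length_append, ih, outerL_length, blockL_length]; ring
lemma grandL_length :
    (grandL u).length = (u+3) + u*(2*u+9) + (u+1)*((u+3) + u*(2*u+9)) := by
  simp [grandL, loadsL_length, blockL_length, mainL_length]; ring

end AMIS

/-- For every `w ≥ 1` there is a graph with exactly `12w` vertices and maximum
degree `w + 4` admitting an execution of A_MIS under the central scheduler,
starting from the all-OUT configuration, with at least `w ^ 3` moves. -/
theorem stmt4 (w : ℕ) (hw : 1 ≤ w) :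
    ∃ G : SimpleGraph (Fin (12 * w)), maxDeg G = w + 4 ∧
      ∃ (m : ℕ) (f : ℕ → Fin (12 * w) → Bool),
        w ^ 3 ≤ m ∧ f 0 = (fun _ => false) ∧
        ∀ i < m, Move G (f i) (f (i + 1)) := by
  obtain ⟨u, rfl⟩ : ∃ u, w = u + 1 := ⟨w - 1, by omega⟩
  refine ⟨AMIS.G u, ?_, (AMIS.grandL u).length,
    fun i => AMIS.applyL u (fun _ => false) ((AMIS.grandL u).take i), ?_, rfl, ?_⟩
  · rw [AMIS.maxDeg_G]
  · rw [AMIS.grandL_length]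
    have h : (u+1)^3 = u^3 + 3*u^2 + 3*u + 1 := by ring
    have h2 : u + 3 + u * (2 * u + 9) + (u + 1) * (u + 3 + u * (2 * u + 9))
        = 2*u^3 + 14*u^2 + 23*u + 6 := by ring
    rw [h, h2]
    have h3 : u^3 + 3*u^2 + 3*u + 1 ≤ (u^3 + 3*u^2 + 3*u + 1) + (u^3 + 11*u^2 + 20*u + 5) :=
      Nat.le_add_right _ _
    calc u^3 + 3*u^2 + 3*u + 1
        ≤ (u^3 + 3*u^2 + 3*u + 1) + (u^3 + 11*u^2 + 20*u + 5) := h3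
      _ = 2*u^3 + 14*u^2 + 23*u + 6 := by ring
  · intro i hi
    exact AMIS.move_of_validL AMIS.grand_spec.1 i hi
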